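/- arXiv:0909.1852 — 8 statements merged into one kernel-verified Lean document; each statement's English description precedes it below -/
import Mathlib

section
/- (Proposition 1) For every positive integer m and every two complex numbers α ≠ 0 and x, ∑_{k=1}^m k^α x^k = ∑_{j=1}^m j! · S(α, j) · σ(x, m, j), where σ(x, m, j) = ∑_{k=j}^m C(k, j) x^k. -/
open Finset

/-- Stirling function of the second kind with complex argument `α`:
`S(α, k) = (1/k!) ∑_{j=1}^k (-1)^{k-j} C(k, j) j^α`. -/
noncomputable def stirlingS (α : ℂ) (k : ℕ) : ℂ :=
  (1 / (Nat.factorial k : ℂ)) *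
    ∑ j ∈ Finset.Icc 1 k, (-1 : ℂ) ^ (k - j) * (Nat.choose k j : ℂ) * (j : ℂ) ^ α

lemma alt_sum_C (n : ℕ) :
    ∑ t ∈ range (n + 1), (-1 : ℂ) ^ t * (Nat.choose n t : ℂ) = if n = 0 then 1 else 0 := by
  have h := Int.alternating_sum_range_choose (n := n)
  have : ((∑ m ∈ range (n + 1), ((-1) ^ m * n.choose m : ℤ) : ℤ) : ℂ)
      = ((if n = 0 then 1 else 0 : ℤ) : ℂ) := by rw [h]
  push_cast at this
  convert this using 2 <;> simp

lemma inner_delta (k i : ℕ) (hik : i ≤ k) :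
    ∑ j ∈ Icc i k, (-1 : ℂ) ^ (j - i) * (Nat.choose k j : ℂ) * (Nat.choose j i : ℂ)
      = if i = k then 1 else 0 := by
  rw [← Finset.Ico_add_one_right_eq_Icc, Finset.sum_Ico_eq_sum_range]
  have hr : k + 1 - i = (k - i) + 1 := by omega
  rw [hr]
  have : ∀ t ∈ range (k - i + 1),
      (-1 : ℂ) ^ (i + t - i) * (Nat.choose k (i + t) : ℂ) * (Nat.choose (i + t) i : ℂ)
      = (Nat.choose k i : ℂ) * ((-1 : ℂ) ^ t * (Nat.choose (k - i) t : ℂ)) := by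
    intro t ht
    simp only [mem_range] at ht
    have h1 : i + t - i = t := by omega
    have h2 := Nat.choose_mul (n := k) (k := i + t) (s := i) (by omega)
    have h2' : ((Nat.choose k (i+t) : ℕ) : ℂ) * (Nat.choose (i+t) i : ℂ)
        = (Nat.choose k i : ℂ) * (Nat.choose (k - i) (i + t - i) : ℂ) := by
      exact_mod_cast congrArg (Nat.cast (R := ℂ)) h2
    rw [h1] at h2' ⊢
    rw [mul_assoc, h2']; ring
  rw [sum_congr rfl this, ← mul_sum, alt_sum_C]
  by_cases h : i = k <;> simp [h, Nat.sub_eq_zero_iff_le, hik, *]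
  omega

lemma key (α : ℂ) (k : ℕ) (hk : 1 ≤ k) :
    ∑ j ∈ Icc 1 k, (Nat.choose k j : ℂ) *
      ∑ i ∈ Icc 1 j, (-1 : ℂ) ^ (j - i) * (Nat.choose j i : ℂ) * (i : ℂ) ^ α = (k : ℂ) ^ α := by
  simp_rw [mul_sum]
  rw [Finset.sum_comm' (s' := fun i => Icc i k) (t' := Icc 1 k)
    (f := fun j i => (Nat.choose k j : ℂ) * ((-1 : ℂ) ^ (j - i) * (Nat.choose j i : ℂ) * (i : ℂ) ^ α))
    (by intro j i; simp only [mem_Icc]; omega)]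
  have : ∀ i ∈ Icc 1 k, ∑ j ∈ Icc i k,
      (Nat.choose k j : ℂ) * ((-1 : ℂ) ^ (j - i) * (Nat.choose j i : ℂ) * (i : ℂ) ^ α)
      = (if i = k then 1 else 0) * (i : ℂ) ^ α := by
    intro i hi
    rw [← inner_delta k i (by simp only [mem_Icc] at hi; omega), sum_mul]
    exact sum_congr rfl fun j _ => by ring
  rw [sum_congr rfl this]
  simp [Finset.sum_ite_eq', hk]

theorem stmt2 (m : ℕ) (hm : 0 < m) (α x : ℂ) (hα : α ≠ 0) :
    ∑ k ∈ Icc 1 m, (k : ℂ) ^ α * x ^ k =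
      ∑ j ∈ Icc 1 m, (Nat.factorial j : ℂ) * stirlingS α j *
        ∑ k ∈ Icc j m, (Nat.choose k j : ℂ) * x ^ k := by
  have hfac : ∀ j : ℕ, (Nat.factorial j : ℂ) * stirlingS α j
      = ∑ i ∈ Icc 1 j, (-1 : ℂ) ^ (j - i) * (Nat.choose j i : ℂ) * (i : ℂ) ^ α := by
    intro j
    rw [stirlingS, ← mul_assoc, mul_one_div, div_self (by exact_mod_cast (Nat.factorial_pos j).ne'),
      one_mul]
  simp_rw [hfac, mul_sum]
  rw [Finset.sum_comm' (s' := fun k => Icc 1 k) (t' := Icc 1 m)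
    (f := fun j k => (∑ i ∈ Icc 1 j, (-1 : ℂ) ^ (j - i) * (Nat.choose j i : ℂ) * (i : ℂ) ^ α) *
      ((Nat.choose k j : ℂ) * x ^ k))
    (by intro j k; simp only [mem_Icc]; omega)]
  refine sum_congr rfl fun k hk => ?_
  simp only [mem_Icc] at hk
  rw [← key α k hk.1, sum_mul]
  exact sum_congr rfl fun j _ => by ring
end

section
/- For every positive integer m and every complex number α ≠ 0, ∑_{k=1}^m k^α = ∑_{j=1}^m C(m, j) · (j-1)! · S(α+1, j). -/
open Finset

/-- Orthogonality: for `r < m`, `∑_{l=r}^m (-1)^{l-r} C(m,l) C(l,r) = 0`. -/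
lemma aux_orth (m r : ℕ) (h : r < m) :
    ∑ l ∈ Icc r m, (-1 : ℤ) ^ (l - r) * (Nat.choose m l : ℤ) * (Nat.choose l r : ℤ) = 0 := by
  have key : ∀ l ∈ Icc r m,
      (-1 : ℤ) ^ (l - r) * (Nat.choose m l : ℤ) * (Nat.choose l r : ℤ)
        = (Nat.choose m r : ℤ) * ((-1 : ℤ) ^ (l - r) * (Nat.choose (m - r) (l - r) : ℤ)) := by
    intro l hl
    rw [mem_Icc] at hl
    have := Nat.choose_mul (n := m) (k := l) (s := r) hl.1
    have hc : (Nat.choose m l : ℤ) * (Nat.choose l r : ℤ)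
        = (Nat.choose m r : ℤ) * (Nat.choose (m - r) (l - r) : ℤ) := by exact_mod_cast this
    linear_combination ((-1 : ℤ) ^ (l - r)) * hc
  rw [Finset.sum_congr rfl key, ← Finset.mul_sum]
  have hreindex : ∑ l ∈ Icc r m, ((-1 : ℤ) ^ (l - r) * (Nat.choose (m - r) (l - r) : ℤ))
      = ∑ t ∈ Finset.range (m - r + 1), ((-1 : ℤ) ^ t * (Nat.choose (m - r) t : ℤ)) := by
    rw [← Finset.Ico_add_one_right_eq_Icc, Finset.sum_Ico_eq_sum_range]
    have : m + 1 - r = m - r + 1 := by omega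
    rw [this]
    apply Finset.sum_congr rfl
    intro t _
    have e : r + t - r = t := by omega
    rw [e]
  rw [hreindex, Int.alternating_sum_range_choose]
  rw [if_neg (by omega)]
  ring

/-- Key identity: for `1 ≤ i ≤ m`, `∑_{j=i}^m (-1)^{j-i} C(m,j) C(j-1,i-1) = 1`. -/
lemma aux_key (i : ℕ) (hi : 1 ≤ i) :
    ∀ m, i ≤ m →
      ∑ j ∈ Icc i m, (-1 : ℤ) ^ (j - i) * (Nat.choose m j : ℤ) *
        (Nat.choose (j - 1) (i - 1) : ℤ) = 1 := by
  intro m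
  induction m with
  | zero => intro h; omega
  | succ n ih =>
    intro him
    rcases Nat.lt_or_ge n i with hn | hn
    · -- base case: i = n + 1
      have hin : i = n + 1 := by omega
      subst hin
      simp
    · -- inductive step: i ≤ n
      have pascal : ∀ j ∈ Icc i (n + 1),
          (-1 : ℤ) ^ (j - i) * (Nat.choose (n + 1) j : ℤ) * (Nat.choose (j - 1) (i - 1) : ℤ)
            = (-1 : ℤ) ^ (j - i) * (Nat.choose n j : ℤ) * (Nat.choose (j - 1) (i - 1) : ℤ)
              + (-1 : ℤ) ^ (j - i) * (Nat.choose n (j - 1) : ℤ) *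
                (Nat.choose (j - 1) (i - 1) : ℤ) := by
        intro j hj
        rw [mem_Icc] at hj
        have hj1 : 1 ≤ j := le_trans hi hj.1
        have : Nat.choose (n + 1) j = Nat.choose n j + Nat.choose n (j - 1) := by
          rcases Nat.exists_eq_add_of_le hj1 with ⟨c, rfl⟩
          rw [Nat.add_comm 1 c, Nat.choose_succ_succ n c]
          simp [Nat.add_comm]
        rw [this]
        push_cast
        ring
      rw [Finset.sum_congr rfl pascal, Finset.sum_add_distrib]
      have h1 : ∑ j ∈ Icc i (n + 1),
          (-1 : ℤ) ^ (j - i) * (Nat.choose n j : ℤ) * (Nat.choose (j - 1) (i - 1) : ℤ) = 1 := by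
        rw [← Finset.Ico_add_one_right_eq_Icc, Finset.sum_Ico_succ_top (by omega), Finset.Ico_add_one_right_eq_Icc]
        rw [ih hn]
        simp [Nat.choose_eq_zero_of_lt (Nat.lt_succ_self n)]
      have h2 : ∑ j ∈ Icc i (n + 1),
          (-1 : ℤ) ^ (j - i) * (Nat.choose n (j - 1) : ℤ) *
            (Nat.choose (j - 1) (i - 1) : ℤ) = 0 := by
        have hre : ∑ j ∈ Icc i (n + 1),
            (-1 : ℤ) ^ (j - i) * (Nat.choose n (j - 1) : ℤ) * (Nat.choose (j - 1) (i - 1) : ℤ)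
            = ∑ l ∈ Icc (i - 1) n,
              (-1 : ℤ) ^ (l - (i - 1)) * (Nat.choose n l : ℤ) * (Nat.choose l (i - 1) : ℤ) := by
          apply Finset.sum_nbij' (fun j => j - 1) (fun l => l + 1)
          · intro j hj; rw [mem_Icc] at *; omega
          · intro l hl; rw [mem_Icc] at *; omega
          · intro j hj; rw [mem_Icc] at hj; omega
          · intro l hl; rw [mem_Icc] at hl; omega
          · intro j hj
            rw [mem_Icc] at hj
            have e : j - 1 - (i - 1) = j - i := by omega
            rw [e]
        rw [hre]
        exact aux_orth n (i - 1) (by omega)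
      rw [h1, h2]; ring

theorem stmt4 (m : ℕ) (hm : 0 < m) (α : ℂ) (hα : α ≠ 0) :
    ∑ k ∈ Icc 1 m, (k : ℂ) ^ α =
      ∑ j ∈ Icc 1 m, (Nat.choose m j : ℂ) * (Nat.factorial (j - 1) : ℂ) *
        stirlingS (α + 1) j := by
  -- Expand stirlingS and swap order of summation
  unfold stirlingS
  have expand : ∑ j ∈ Icc 1 m, (Nat.choose m j : ℂ) * (Nat.factorial (j - 1) : ℂ) *
      ((1 / (Nat.factorial j : ℂ)) *
        ∑ i ∈ Finset.Icc 1 j, (-1 : ℂ) ^ (j - i) * (Nat.choose j i : ℂ) * (i : ℂ) ^ (α + 1))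
      = ∑ j ∈ Icc 1 m, ∑ i ∈ Icc 1 j,
          (Nat.choose m j : ℂ) * (Nat.factorial (j - 1) : ℂ) * (1 / (Nat.factorial j : ℂ)) *
            ((-1 : ℂ) ^ (j - i) * (Nat.choose j i : ℂ) * (i : ℂ) ^ (α + 1)) := by
    apply Finset.sum_congr rfl
    intro j _
    rw [Finset.mul_sum, Finset.mul_sum]
    exact Finset.sum_congr rfl fun i _ => by ring
  rw [expand]
  rw [Finset.sum_comm' (s' := fun i => Icc i m) (t' := Icc 1 m)
    (by intro j i; simp only [mem_Icc]; omega)]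
  apply Finset.sum_congr rfl
  intro i hi
  rw [mem_Icc] at hi
  have hi1 : 1 ≤ i := hi.1
  have him : i ≤ m := hi.2
  have hiC : (i : ℂ) ≠ 0 := by exact_mod_cast Nat.one_le_iff_ne_zero.mp hi1
  -- pull out i^(α+1)
  have pullout : ∑ j ∈ Icc i m,
      (Nat.choose m j : ℂ) * (Nat.factorial (j - 1) : ℂ) * (1 / (Nat.factorial j : ℂ)) *
        ((-1 : ℂ) ^ (j - i) * (Nat.choose j i : ℂ) * (i : ℂ) ^ (α + 1))
      = (∑ j ∈ Icc i m,
          (Nat.choose m j : ℂ) * (Nat.factorial (j - 1) : ℂ) * (1 / (Nat.factorial j : ℂ)) *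
            ((-1 : ℂ) ^ (j - i) * (Nat.choose j i : ℂ))) * (i : ℂ) ^ (α + 1) := by
    rw [Finset.sum_mul]
    apply Finset.sum_congr rfl
    intro j _
    ring
  rw [pullout]
  -- the coefficient times i equals 1
  have coeff : (∑ j ∈ Icc i m,
      (Nat.choose m j : ℂ) * (Nat.factorial (j - 1) : ℂ) * (1 / (Nat.factorial j : ℂ)) *
        ((-1 : ℂ) ^ (j - i) * (Nat.choose j i : ℂ))) * (i : ℂ) = 1 := by
    rw [Finset.sum_mul]
    have termeq : ∀ j ∈ Icc i m,
        (Nat.choose m j : ℂ) * (Nat.factorial (j - 1) : ℂ) * (1 / (Nat.factorial j : ℂ)) *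
          ((-1 : ℂ) ^ (j - i) * (Nat.choose j i : ℂ)) * (i : ℂ)
        = (-1 : ℂ) ^ (j - i) * (Nat.choose m j : ℂ) * (Nat.choose (j - 1) (i - 1) : ℂ) := by
      intro j hj
      rw [mem_Icc] at hj
      have hj1 : 1 ≤ j := le_trans hi1 hj.1
      have hfac : (Nat.factorial j : ℂ) = (j : ℂ) * (Nat.factorial (j - 1) : ℂ) := by
        rcases Nat.exists_eq_add_of_le hj1 with ⟨c, rfl⟩
        rw [Nat.add_comm 1 c]
        push_cast [Nat.factorial_succ]
        simp
      have hchoose : (i : ℂ) * (Nat.choose j i : ℂ)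
          = (j : ℂ) * (Nat.choose (j - 1) (i - 1) : ℂ) := by
        have := Nat.add_one_mul_choose_eq (j - 1) (i - 1)
        have hj' : j - 1 + 1 = j := by omega
        have hi' : i - 1 + 1 = i := by omega
        rw [hj', hi'] at this
        have : (j : ℂ) * (Nat.choose (j - 1) (i - 1) : ℂ)
            = (Nat.choose j i : ℂ) * (i : ℂ) := by exact_mod_cast congrArg (Nat.cast : ℕ → ℂ) this
        rw [this]; ring
      have hjC : (j : ℂ) ≠ 0 := by exact_mod_cast Nat.one_le_iff_ne_zero.mp hj1
      have hfC : (Nat.factorial (j - 1) : ℂ) ≠ 0 := by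
        exact_mod_cast (Nat.factorial_pos (j - 1)).ne'
      rw [hfac]
      field_simp
      linear_combination ((Nat.choose m j : ℂ)) * hchoose
    rw [Finset.sum_congr rfl termeq]
    exact_mod_cast congrArg (Int.cast : ℤ → ℂ) (aux_key i hi1 m him)
  -- conclude: coefficient = 1/i, and i^(α+1) = i^α * i
  have hcoeffval : ∑ j ∈ Icc i m,
      (Nat.choose m j : ℂ) * (Nat.factorial (j - 1) : ℂ) * (1 / (Nat.factorial j : ℂ)) *
        ((-1 : ℂ) ^ (j - i) * (Nat.choose j i : ℂ)) = 1 / (i : ℂ) := by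
    rw [eq_div_iff hiC]
    exact coeff
  rw [hcoeffval]
  rw [Complex.cpow_add _ _ hiC, Complex.cpow_one]
  field_simp
end

section
/- For every positive integer m and every two complex numbers α ≠ 0 and x, ∑_{k=1}^m x^k / k^α = ∑_{j=1}^m j! · S(−α, j) · σ(x, m, j), where σ(x, m, j) = ∑_{k=j}^m C(k, j) x^k. -/
open Finset

lemma alt_sum_choose (n : ℕ) :
    ∑ t ∈ Finset.range (n + 1), (-1 : ℂ) ^ t * (Nat.choose n t : ℂ) =
      if n = 0 then 1 else 0 := by
  have := @Int.alternating_sum_range_choose n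
  have h2 : ((∑ i ∈ Finset.range (n + 1), (-1 : ℤ) ^ i * n.choose i : ℤ) : ℂ)
      = ((if n = 0 then 1 else 0 : ℤ) : ℂ) := by rw [this]
  push_cast at h2
  split_ifs at h2 ⊢ <;> simpa using h2

lemma binom_inv (f : ℕ → ℂ) (k : ℕ) (hk : 1 ≤ k) :
    ∑ j ∈ Finset.Icc 1 k, (Nat.choose k j : ℂ) *
      ∑ i ∈ Finset.Icc 1 j, (-1 : ℂ) ^ (j - i) * (Nat.choose j i : ℂ) * f i = f k := by
  have h1 : ∀ j, Finset.Icc 1 j = Finset.Ico 1 (j + 1) := fun j => by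
    rw [Finset.Ico_add_one_right_eq_Icc]
  simp only [h1, Finset.mul_sum]
  rw [← Finset.sum_Ico_Ico_comm 1 (k + 1)
    (fun i j => (Nat.choose k j : ℂ) * ((-1 : ℂ) ^ (j - i) * (Nat.choose j i : ℂ) * f i))]
  have key : ∀ i ∈ Finset.Ico 1 (k + 1),
      (∑ j ∈ Finset.Ico i (k + 1),
        (Nat.choose k j : ℂ) * ((-1 : ℂ) ^ (j - i) * (Nat.choose j i : ℂ) * f i)) =
      if i = k then f k else 0 := by
    intro i hi
    rw [Finset.mem_Ico] at hi
    have hik : i ≤ k := by omega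
    have : ∀ j ∈ Finset.Ico i (k + 1),
        (Nat.choose k j : ℂ) * ((-1 : ℂ) ^ (j - i) * (Nat.choose j i : ℂ) * f i) =
        (Nat.choose k i : ℂ) * ((-1 : ℂ) ^ (j - i) * (Nat.choose (k - i) (j - i) : ℂ) * f i) := by
      intro j hj
      rw [Finset.mem_Ico] at hj
      have hjk : j ≤ k := by omega
      have := Nat.choose_mul (n := k) hj.1
      have hc : (Nat.choose k j : ℂ) * (Nat.choose j i : ℂ)
          = (Nat.choose k i : ℂ) * (Nat.choose (k - i) (j - i) : ℂ) := by
        exact_mod_cast congrArg (Nat.cast : ℕ → ℂ) this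
      calc (k.choose j : ℂ) * ((-1 : ℂ) ^ (j - i) * (j.choose i : ℂ) * f i)
          = ((k.choose j : ℂ) * (j.choose i)) * ((-1) ^ (j - i) * f i) := by ring
        _ = ((k.choose i : ℂ) * ((k-i).choose (j-i))) * ((-1) ^ (j - i) * f i) := by rw [hc]
        _ = _ := by ring
    rw [Finset.sum_congr rfl this]
    rw [Finset.sum_Ico_eq_sum_range]
    simp only [Nat.add_sub_cancel_left]
    have hrw : k + 1 - i = (k - i) + 1 := by omega
    rw [hrw]
    rw [← Finset.mul_sum]
    have : (∑ t ∈ Finset.range (k - i + 1), (-1 : ℂ) ^ t * ((k - i).choose t : ℂ) * f i)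
        = (∑ t ∈ Finset.range (k - i + 1), (-1 : ℂ) ^ t * ((k - i).choose t : ℂ)) * f i := by
      rw [Finset.sum_mul]
    rw [this, alt_sum_choose]
    by_cases h : i = k
    · subst h; simp
    · have : k - i ≠ 0 := by omega
      simp [this, h]
  rw [Finset.sum_congr rfl key]
  rw [Finset.sum_ite_eq' (Finset.Ico 1 (k + 1)) k]
  simp [hk, Nat.lt_succ_self]

theorem stmt6 (m : ℕ) (hm : 0 < m) (α x : ℂ) (hα : α ≠ 0) :
    ∑ k ∈ Icc 1 m, x ^ k / (k : ℂ) ^ α =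
      ∑ j ∈ Icc 1 m, (Nat.factorial j : ℂ) * stirlingS (-α) j *
        ∑ k ∈ Icc j m, (Nat.choose k j : ℂ) * x ^ k := by
  have hfac : ∀ j : ℕ, (Nat.factorial j : ℂ) * stirlingS (-α) j =
      ∑ i ∈ Finset.Icc 1 j, (-1 : ℂ) ^ (j - i) * (Nat.choose j i : ℂ) * (i : ℂ) ^ (-α) := by
    intro j
    unfold stirlingS
    rw [← mul_assoc, mul_one_div, div_self (by exact_mod_cast j.factorial_ne_zero), one_mul]
  -- rewrite RHS
  simp only [hfac]
  -- swap order of summation on RHS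
  have h1 : ∀ a b : ℕ, Finset.Icc a b = Finset.Ico a (b + 1) := fun a b => by
    rw [Finset.Ico_add_one_right_eq_Icc]
  simp only [h1, Finset.mul_sum]
  rw [Finset.sum_Ico_Ico_comm 1 (m + 1)
    (fun j k => (∑ i ∈ Finset.Ico 1 (j+1), (-1 : ℂ) ^ (j - i) * (Nat.choose j i : ℂ) * (i : ℂ) ^ (-α)) *
      ((Nat.choose k j : ℂ) * x ^ k))]
  refine Finset.sum_congr rfl fun k hk => ?_
  rw [Finset.mem_Ico] at hk
  have hk1 : 1 ≤ k := hk.1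
  have := binom_inv (fun i => (i : ℂ) ^ (-α)) k hk1
  simp only [h1] at this
  calc x ^ k / (k : ℂ) ^ α = (k : ℂ) ^ (-α) * x ^ k := by
        rw [Complex.cpow_neg]; ring
    _ = (∑ j ∈ Finset.Ico 1 (k+1), (Nat.choose k j : ℂ) *
          ∑ i ∈ Finset.Ico 1 (j+1), (-1 : ℂ) ^ (j - i) * (Nat.choose j i : ℂ) * (i : ℂ) ^ (-α)) * x ^ k := by
        rw [this]
    _ = _ := by rw [Finset.sum_mul]; exact Finset.sum_congr rfl fun j _ => by ring
end

section
/- (Proposition 2) For every positive integer m and every two complex numbers α ≠ 0 and x, ∑_{k=1}^m C(m, k) k^α x^k = ∑_{j=1}^m C(m, j) · j! · S(α, j) · x^j (1+x)^{m−j}. -/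
open Finset

lemma key_inner (m i : ℕ) (hi : i ≤ m) (x : ℂ) :
    ∑ j ∈ Icc i m, (Nat.choose m j : ℂ) * ((-1 : ℂ) ^ (j - i) * (Nat.choose j i : ℂ)) *
        x ^ j * (1 + x) ^ (m - j) = (Nat.choose m i : ℂ) * x ^ i := by
  rw [show Icc i m = Ico i (m + 1) by rw [Finset.Ico_add_one_right_eq_Icc],
    Finset.sum_Ico_eq_sum_range]
  have hrw : ∀ t ∈ Finset.range (m + 1 - i),
      (Nat.choose m (i + t) : ℂ) * ((-1 : ℂ) ^ (i + t - i) * (Nat.choose (i + t) i : ℂ)) *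
        x ^ (i + t) * (1 + x) ^ (m - (i + t)) =
      (Nat.choose m i : ℂ) * x ^ i *
        ((-x) ^ t * (1 + x) ^ (m - i - t) * (Nat.choose (m - i) t : ℂ)) := by
    intro t ht
    rw [Finset.mem_range] at ht
    have hitm : i + t ≤ m := by omega
    have hcn : m.choose (i + t) * (i + t).choose i = m.choose i * (m - i).choose t := by
      rw [Nat.choose_mul (Nat.le_add_right i t), Nat.add_sub_cancel_left]
    have hc : (m.choose (i + t) : ℂ) * ((i + t).choose i : ℂ) =
        (m.choose i : ℂ) * ((m - i).choose t : ℂ) := by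
      rw [← Nat.cast_mul, ← Nat.cast_mul, hcn]
    have hsub : m - (i + t) = m - i - t := by omega
    rw [Nat.add_sub_cancel_left, hsub, neg_pow, pow_add]
    ring_nf
    rw [hc]
    ring
  rw [Finset.sum_congr rfl hrw, ← Finset.mul_sum]
  have hbin : ∑ t ∈ Finset.range (m + 1 - i),
      (-x) ^ t * (1 + x) ^ (m - i - t) * ((m - i).choose t : ℂ) = 1 := by
    have := add_pow (-x) (1 + x) (m - i)
    rw [show (-x) + (1 + x) = 1 by ring, one_pow] at this
    rw [show m + 1 - i = (m - i) + 1 by omega]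
    exact this.symm
  rw [hbin, mul_one]

theorem stmt7 (m : ℕ) (hm : 0 < m) (α x : ℂ) (hα : α ≠ 0) :
    ∑ k ∈ Icc 1 m, (Nat.choose m k : ℂ) * (k : ℂ) ^ α * x ^ k =
      ∑ j ∈ Icc 1 m, (Nat.choose m j : ℂ) * (Nat.factorial j : ℂ) * stirlingS α j *
        x ^ j * (1 + x) ^ (m - j) := by
  have hR : ∀ j ∈ Icc 1 m,
      (Nat.choose m j : ℂ) * (Nat.factorial j : ℂ) * stirlingS α j * x ^ j * (1 + x) ^ (m - j)
      = ∑ i ∈ Icc 1 j, (-1 : ℂ) ^ (j - i) * (Nat.choose j i : ℂ) * (i : ℂ) ^ α *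
          (Nat.choose m j : ℂ) * x ^ j * (1 + x) ^ (m - j) := by
    intro j _
    have hfj : (Nat.factorial j : ℂ) ≠ 0 := Nat.cast_ne_zero.mpr (Nat.factorial_ne_zero j)
    unfold stirlingS
    rw [Finset.mul_sum, Finset.mul_sum, Finset.sum_mul, Finset.sum_mul]
    refine Finset.sum_congr rfl fun i _ => ?_
    field_simp
  rw [Finset.sum_congr rfl hR]
  have hswap : ∀ (F : ℕ → ℕ → ℂ), (∑ j ∈ Icc 1 m, ∑ i ∈ Icc 1 j, F j i) =
      ∑ i ∈ Icc 1 m, ∑ j ∈ Icc i m, F j i := by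
    intro F
    have h := Finset.sum_Ico_Ico_comm 1 (m + 1) (fun i j => F j i)
    have e1 : (∑ j ∈ Icc 1 m, ∑ i ∈ Icc 1 j, F j i)
        = ∑ j ∈ Ico 1 (m + 1), ∑ i ∈ Ico 1 (j + 1), F j i := by
      rw [Finset.Ico_add_one_right_eq_Icc]
      exact Finset.sum_congr rfl fun j _ => by rw [Finset.Ico_add_one_right_eq_Icc]
    have e2 : (∑ i ∈ Icc 1 m, ∑ j ∈ Icc i m, F j i)
        = ∑ i ∈ Ico 1 (m + 1), ∑ j ∈ Ico i (m + 1), F j i := by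
      rw [Finset.Ico_add_one_right_eq_Icc]
      exact Finset.sum_congr rfl fun i _ => by rw [Finset.Ico_add_one_right_eq_Icc]
    rw [e1, e2, h]
  rw [hswap]
  refine Finset.sum_congr rfl fun i hi => ?_
  rw [Finset.mem_Icc] at hi
  have h2 : ∑ j ∈ Icc i m, (-1:ℂ)^(j-i) * ((j.choose i : ℂ)) * (i:ℂ)^α * (m.choose j : ℂ)
      * x ^ j * (1+x)^(m-j)
      = (i:ℂ)^α * ∑ j ∈ Icc i m, (m.choose j : ℂ) * ((-1:ℂ)^(j-i) * (j.choose i : ℂ))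
        * x ^ j * (1+x)^(m-j) := by
    rw [Finset.mul_sum]; exact Finset.sum_congr rfl fun j _ => by ring
  rw [h2, key_inner m i hi.2 x]
  ring
end

section
/- (Proposition 3) For every positive integer m and every complex number α ≠ 0, ∑_{k=1}^m [m over k] · k^α = ∑_{j=1}^m j! · S(α, j) · [m+1 over j+1], where [n over k] denotes the unsigned Stirling number of the first kind. -/
open Finset

/-- Unsigned Stirling number of the first kind: coefficient of `x^k` in
`x (x+1) ⋯ (x+n-1)`. -/
noncomputable def stirlingFirst (n k : ℕ) : ℕ := (ascPochhammer ℕ n).coeff k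

open Polynomial in
lemma stirlingFirst_intCast (n k : ℕ) :
    ((stirlingFirst n k : ℕ) : ℤ) = (ascPochhammer ℤ n).coeff k := by
  rw [stirlingFirst, ← ascPochhammer_map (Nat.castRingHom ℤ) n, coeff_map]
  rfl

open Polynomial in
lemma keyA (m i : ℕ) :
    ((stirlingFirst m i : ℕ) : ℤ) =
      ∑ j ∈ range (m + 1), (-1 : ℤ) ^ (j - i) * (j.choose i : ℤ) *
        ((stirlingFirst (m + 1) (j + 1) : ℕ) : ℤ) := by
  simp only [stirlingFirst_intCast]
  set R : ℤ[X] := (ascPochhammer ℤ m).comp (X + 1) with hR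
  have hcoef : ∀ j : ℕ, (ascPochhammer ℤ (m + 1)).coeff (j + 1) = R.coeff j := by
    intro j
    rw [ascPochhammer_succ_left, coeff_X_mul]
  have hdeg : R.natDegree < m + 1 := by
    have h1 : R.natDegree ≤ (ascPochhammer ℤ m).natDegree * (X + 1 : ℤ[X]).natDegree :=
      natDegree_comp_le
    have h2 : (X + 1 : ℤ[X]).natDegree = 1 := by
      simpa using natDegree_X_add_C (1 : ℤ)
    rw [h2, mul_one, ascPochhammer_natDegree] at h1
    omega
  have hback : R.comp (X - 1) = ascPochhammer ℤ m := by
    rw [hR, Polynomial.comp_assoc]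
    simp [sub_add_cancel]
  conv_lhs => rw [← hback]
  rw [comp_eq_sum_left, Polynomial.sum_over_range' R (by simp) (m + 1) hdeg,
    finset_sum_coeff]
  refine Finset.sum_congr rfl fun j _ => ?_
  rw [hcoef, coeff_C_mul, show (X - 1 : ℤ[X]) = X + C (-1) by simp [sub_eq_add_neg],
    coeff_X_add_C_pow]
  ring

lemma keyC (m i : ℕ) :
    ((stirlingFirst m i : ℕ) : ℂ) =
      ∑ j ∈ range (m + 1), (-1 : ℂ) ^ (j - i) * (j.choose i : ℂ) *
        ((stirlingFirst (m + 1) (j + 1) : ℕ) : ℂ) := by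
  have := congrArg (fun z : ℤ => (z : ℂ)) (keyA m i)
  push_cast at this
  exact this

theorem stmt9 (m : ℕ) (hm : 0 < m) (α : ℂ) (hα : α ≠ 0) :
    ∑ k ∈ Icc 1 m, (stirlingFirst m k : ℂ) * (k : ℂ) ^ α =
      ∑ j ∈ Icc 1 m, (Nat.factorial j : ℂ) * stirlingS α j *
        (stirlingFirst (m + 1) (j + 1) : ℂ) := by
  have hfac : ∀ j : ℕ, (Nat.factorial j : ℂ) * stirlingS α j =
      ∑ i ∈ Icc 1 j, (-1 : ℂ) ^ (j - i) * (j.choose i : ℂ) * (i : ℂ) ^ α := by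
    intro j
    rw [stirlingS, ← mul_assoc, mul_one_div,
      div_self (by exact_mod_cast j.factorial_ne_zero), one_mul]
  -- rewrite RHS
  have hsub : ∀ j ∈ Icc 1 m,
      (∑ i ∈ Icc 1 j, (-1 : ℂ) ^ (j - i) * (j.choose i : ℂ) * (i : ℂ) ^ α) =
      ∑ i ∈ Icc 1 m, (-1 : ℂ) ^ (j - i) * (j.choose i : ℂ) * (i : ℂ) ^ α := by
    intro j hj
    simp only [mem_Icc] at hj
    refine Finset.sum_subset (Finset.Icc_subset_Icc_right hj.2) fun i hi hni => ?_
    simp only [mem_Icc] at hi hni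
    have : j < i := by omega
    simp [Nat.choose_eq_zero_of_lt this]
  calc ∑ k ∈ Icc 1 m, (stirlingFirst m k : ℂ) * (k : ℂ) ^ α
      = ∑ i ∈ Icc 1 m, (∑ j ∈ range (m + 1), (-1 : ℂ) ^ (j - i) * (j.choose i : ℂ) *
          ((stirlingFirst (m + 1) (j + 1) : ℕ) : ℂ)) * (i : ℂ) ^ α := by
        refine Finset.sum_congr rfl fun i _ => ?_
        rw [keyC]
    _ = ∑ i ∈ Icc 1 m, (∑ j ∈ Icc 1 m, (-1 : ℂ) ^ (j - i) * (j.choose i : ℂ) *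
          ((stirlingFirst (m + 1) (j + 1) : ℕ) : ℂ)) * (i : ℂ) ^ α := by
        refine Finset.sum_congr rfl fun i hi => ?_
        simp only [mem_Icc] at hi
        congr 1
        refine (Finset.sum_subset (fun j hj => ?_) fun j hj hnj => ?_).symm
        · simp only [mem_Icc] at hj; simp only [mem_range]; omega
        · simp only [mem_range] at hj; simp only [mem_Icc] at hnj
          have hj0 : j = 0 := by omega
          subst hj0
          simp [Nat.choose_eq_zero_of_lt hi.1]
    _ = ∑ j ∈ Icc 1 m, ∑ i ∈ Icc 1 m, (-1 : ℂ) ^ (j - i) * (j.choose i : ℂ) * (i : ℂ) ^ α *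
          ((stirlingFirst (m + 1) (j + 1) : ℕ) : ℂ) := by
        rw [Finset.sum_comm]
        refine Finset.sum_congr rfl fun i _ => ?_
        rw [Finset.sum_mul]
        refine Finset.sum_congr rfl fun j _ => ?_
        ring
    _ = ∑ j ∈ Icc 1 m, (Nat.factorial j : ℂ) * stirlingS α j *
          (stirlingFirst (m + 1) (j + 1) : ℂ) := by
        refine Finset.sum_congr rfl fun j hj => ?_
        rw [hfac, hsub j hj, Finset.sum_mul]
end

section
/- (Proposition 4, second identity) For every positive integer m and every complex number α ≠ 0, ∑_{k=1}^m k^α / (m − k + 1) = ∑_{j=1}^m j! · S(α, j) · C(m+1, j) · (H_{m+1} − H_j). -/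
open Finset

lemma altsum (n r : ℕ) :
    ∑ s ∈ range (r+1), (-1:ℚ)^s * ((n+1).choose s) = (-1)^r * (n.choose r) := by
  induction r with
  | zero => simp
  | succ r ih =>
    rw [sum_range_succ, ih, Nat.choose_succ_succ' n r]
    push_cast
    ring

lemma betasum (n : ℕ) : ∀ x : ℕ, 0 < x →
    ∑ s ∈ range (n+1), (-1:ℚ)^s * (n.choose s) / (s + x) =
      (n.factorial * (x-1).factorial) / ((n+x).factorial) := by
  induction n with
  | zero =>
    intro x hx
    obtain ⟨y, rfl⟩ : ∃ y, x = y + 1 := ⟨x-1, by omega⟩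
    rw [Finset.sum_range_one, Nat.add_sub_cancel, Nat.zero_add, Nat.factorial_succ]
    have h0 : ((y:ℚ) + 1) ≠ 0 := by positivity
    have h1 : (y.factorial : ℚ) ≠ 0 := by positivity
    push_cast
    field_simp
    simp
  | succ n ih =>
    intro x hx
    obtain ⟨y, rfl⟩ : ∃ y, x = y + 1 := ⟨x-1, by omega⟩
    have step : ∑ s ∈ range (n+2), (-1:ℚ)^s * ((n+1).choose s) / (s + (y+1)) =
        (∑ s ∈ range (n+1), (-1:ℚ)^s * (n.choose s) / (s + (y+1))) -
        ∑ s ∈ range (n+1), (-1:ℚ)^s * (n.choose s) / (s + (y+2)) := by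
      have h1 : ∑ s ∈ range (n+2), (-1:ℚ)^s * ((n+1).choose s) / (s + (y+1)) =
          (∑ s ∈ range (n+1), (-1:ℚ)^(s+1) * ((n+1).choose (s+1)) / ((s:ℚ)+1 + (y+1)))
            + 1 / (y+1) := by
        rw [Finset.sum_range_succ' (fun s => (-1:ℚ)^s * ((n+1).choose s) / (s + ((y:ℚ)+1)))]
        push_cast
        norm_num
      have h2 : ∑ s ∈ range (n+2), (-1:ℚ)^s * (n.choose s) / (s + (y+1)) =
          (∑ s ∈ range (n+1), (-1:ℚ)^(s+1) * (n.choose (s+1)) / ((s:ℚ)+1 + (y+1)))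
            + 1 / (y+1) := by
        rw [Finset.sum_range_succ' (fun s => (-1:ℚ)^s * (n.choose s) / (s + ((y:ℚ)+1)))]
        push_cast
        norm_num
      have h3 : ∑ s ∈ range (n+2), (-1:ℚ)^s * (n.choose s) / (s + (y+1)) =
          ∑ s ∈ range (n+1), (-1:ℚ)^s * (n.choose s) / (s + (y+1)) := by
        rw [Finset.sum_range_succ, Nat.choose_succ_self]
        simp
      rw [h1]
      have h4 : ∀ s ∈ range (n+1), (-1:ℚ)^(s+1) * ((n+1).choose (s+1)) / ((s:ℚ)+1 + (y+1)) =
          (-1:ℚ)^(s+1) * (n.choose (s+1)) / ((s:ℚ)+1 + (y+1)) +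
          (-((-1:ℚ)^s * (n.choose s) / (s + (y+2)))) := by
        intro s _
        rw [Nat.choose_succ_succ' n s]
        push_cast
        have hd : ((s:ℚ)+1) + (y+1) = s + (y+2) := by ring
        rw [hd]
        ring
      rw [Finset.sum_congr rfl h4, Finset.sum_add_distrib, Finset.sum_neg_distrib]
      have := h2.symm.trans h3
      linarith [this]
    have ih1 := ih (y+1) (by omega)
    have ih2 := ih (y+2) (by omega)
    rw [Nat.add_sub_cancel] at ih1
    have e2 : (y+2) - 1 = y + 1 := by omega
    rw [e2] at ih2
    push_cast at ih1 ih2 step ⊢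
    rw [step, ih1, ih2]
    have f1 : (n + (y+2)).factorial = (n + (y+2)) * (n + (y+1)).factorial := by
      rw [show n + (y+2) = (n + (y+1)) + 1 by ring, Nat.factorial_succ]
    have f2 : (n + 1 + (y+1)).factorial = (n + (y+2)) * (n + (y+1)).factorial := by
      rw [show n + 1 + (y+1) = (n + (y+1)) + 1 by ring, Nat.factorial_succ]
      ring
    have f3 : (y+1).factorial = (y+1) * y.factorial := Nat.factorial_succ y
    have f4 : (n+1).factorial = (n+1) * n.factorial := Nat.factorial_succ n
    rw [f1, f2, f3, f4]
    have p1 : ((n + (y+1)).factorial : ℚ) ≠ 0 := by positivity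
    have p2 : (y.factorial : ℚ) ≠ 0 := by positivity
    have p3 : ((n:ℚ) + (y+2)) ≠ 0 := by positivity
    have p4 : ((y:ℚ)+1) ≠ 0 := by positivity
    push_cast
    field_simp
    ring

lemma innerAlt (m i t : ℕ) (hit : i ≤ t) (htm : t ≤ m) :
    ∑ j ∈ Ico i (t+1), (-1:ℚ)^(j-i) * (j.choose i) * ((m+1).choose j) =
      ((m+1).choose i) * ((-1:ℚ)^(t-i) * ((m-i).choose (t-i))) := by
  rw [Finset.sum_Ico_eq_sum_range, show t + 1 - i = (t-i) + 1 by omega]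
  have hcast : ∀ s ∈ range ((t-i)+1),
      (-1:ℚ)^((i+s)-i) * ((i+s).choose i) * ((m+1).choose (i+s)) =
      ((m+1).choose i : ℚ) * ((-1:ℚ)^s * (((m-i)+1).choose s)) := by
    intro s hs
    simp only [mem_range] at hs
    rw [Nat.add_sub_cancel_left]
    have hc := Nat.choose_mul (n := m+1) (show i ≤ i + s by omega)
    rw [Nat.add_sub_cancel_left, show m + 1 - i = (m-i)+1 by omega] at hc
    have hcq : (((m+1).choose (i+s) : ℚ)) * ((i+s).choose i) =
        ((m+1).choose i : ℚ) * (((m-i)+1).choose s) := by exact_mod_cast hc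
    calc (-1:ℚ)^s * ((i+s).choose i) * ((m+1).choose (i+s))
        = (-1:ℚ)^s * (((m+1).choose (i+s) : ℚ) * ((i+s).choose i)) := by ring
      _ = ((m+1).choose i : ℚ) * ((-1:ℚ)^s * (((m-i)+1).choose s)) := by rw [hcq]; ring
  rw [Finset.sum_congr rfl hcast, ← Finset.mul_sum, altsum (m-i) (t-i)]

lemma key_s12 (m i : ℕ) (h2 : i ≤ m) :
    ∑ j ∈ Icc i m, (-1:ℚ)^(j-i) * (j.choose i) * ((m+1).choose j) *
        ((harmonic (m+1) : ℚ) - harmonic j) = (((m - i + 1 : ℕ) : ℚ))⁻¹ := by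
  have hharm : ∀ j ∈ Icc i m, (-1:ℚ)^(j-i) * (j.choose i) * ((m+1).choose j) *
      ((harmonic (m+1) : ℚ) - harmonic j) =
      ∑ t ∈ Ico j (m+1), (-1:ℚ)^(j-i) * (j.choose i) * ((m+1).choose j) * ((t:ℚ)+1)⁻¹ := by
    intro j hj
    simp only [mem_Icc] at hj
    have hd : (harmonic (m+1) : ℚ) - harmonic j = ∑ t ∈ Ico j (m+1), ((t:ℚ)+1)⁻¹ := by
      rw [eq_comm, Finset.sum_Ico_eq_sub _ (show j ≤ m+1 by omega), harmonic, harmonic]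
      push_cast
      rfl
    rw [hd, Finset.mul_sum]
  rw [Finset.sum_congr rfl hharm, ← Finset.Ico_add_one_right_eq_Icc i m]
  rw [Finset.sum_Ico_Ico_comm]
  have hinner : ∀ t ∈ Ico i (m+1),
      ∑ j ∈ Ico i (t+1), (-1:ℚ)^(j-i) * (j.choose i) * ((m+1).choose j) * ((t:ℚ)+1)⁻¹ =
      ((m+1).choose i : ℚ) * ((-1:ℚ)^(t-i) * ((m-i).choose (t-i)) * ((t:ℚ)+1)⁻¹) := by
    intro t ht
    simp only [mem_Ico] at ht
    rw [← Finset.sum_mul, innerAlt m i t ht.1 (by omega)]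
    ring
  rw [Finset.sum_congr rfl hinner, ← Finset.mul_sum]
  rw [Finset.sum_Ico_eq_sum_range, show m + 1 - i = (m-i) + 1 by omega]
  have hre : ∀ s ∈ range ((m-i)+1),
      (-1:ℚ)^((i+s)-i) * (((m-i)).choose ((i+s)-i)) * ((((i+s):ℕ):ℚ)+1)⁻¹ =
      (-1:ℚ)^s * ((m-i).choose s) / ((s:ℚ) + (i+1:ℕ)) := by
    intro s hs
    rw [Nat.add_sub_cancel_left]
    push_cast
    rw [div_eq_mul_inv]
    ring_nf
  rw [Finset.sum_congr rfl hre, betasum (m-i) (i+1) (by omega)]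
  rw [Nat.add_sub_cancel, show (m-i) + (i+1) = m + 1 by omega]
  have hc := Nat.choose_mul_factorial_mul_factorial (show i ≤ m+1 by omega)
  rw [show m + 1 - i = (m-i)+1 by omega, Nat.factorial_succ] at hc
  have hq : ((m+1).choose i : ℚ) * i.factorial * (((m-i:ℕ):ℚ)+1) * (m-i).factorial
      = (m+1).factorial := by
    push_cast [← hc]
    ring
  have p1 : ((m+1).factorial : ℚ) ≠ 0 := by positivity
  rw [show ((m - i + 1 : ℕ) : ℚ) = ((m-i:ℕ):ℚ) + 1 by push_cast; ring]
  apply eq_inv_of_mul_eq_one_left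
  have e : ((m+1).choose i : ℚ) * ((((m-i).factorial:ℚ)) * ↑i.factorial / ↑(m+1).factorial) *
      ((((m-i:ℕ):ℚ)) + 1) =
      (((m+1).choose i : ℚ) * ↑i.factorial * ((((m-i:ℕ):ℚ)) + 1) * ↑(m-i).factorial) /
        ↑(m+1).factorial := by ring
  rw [e, div_eq_one_iff_eq p1]
  linear_combination hq


theorem stmt12 (m : ℕ) (hm : 0 < m) (α : ℂ) (hα : α ≠ 0) :
    ∑ k ∈ Icc 1 m, (k : ℂ) ^ α / ((m - k + 1 : ℕ) : ℂ) =
      ∑ j ∈ Icc 1 m, (Nat.factorial j : ℂ) * stirlingS α j *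
        (Nat.choose (m + 1) j : ℂ) *
        (((harmonic (m + 1) : ℚ) : ℂ) - ((harmonic j : ℚ) : ℂ)) := by
  have h1 : ∀ j ∈ Icc 1 m, (Nat.factorial j : ℂ) * stirlingS α j *
      (Nat.choose (m + 1) j : ℂ) * (((harmonic (m + 1) : ℚ) : ℂ) - ((harmonic j : ℚ) : ℂ)) =
      ∑ i ∈ Ico 1 (j+1), (-1:ℂ)^(j-i) * (j.choose i) * (i:ℂ)^α * ((m+1).choose j) *
        (((harmonic (m + 1) : ℚ) : ℂ) - ((harmonic j : ℚ) : ℂ)) := by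
    intro j _
    rw [stirlingS, ← mul_assoc ((j.factorial : ℂ)), mul_one_div,
      div_self (by exact_mod_cast j.factorial_ne_zero), one_mul, Finset.Ico_add_one_right_eq_Icc,
      Finset.sum_mul, Finset.sum_mul]
  rw [Finset.sum_congr rfl h1, show Icc 1 m = Ico 1 (m+1) from (Finset.Ico_add_one_right_eq_Icc 1 m).symm,
    ← Finset.sum_Ico_Ico_comm]
  apply Finset.sum_congr rfl
  intro i hi
  simp only [mem_Ico] at hi
  have hsum : ∑ j ∈ Ico i (m+1), (-1:ℂ)^(j-i) * (j.choose i) * (i:ℂ)^α * ((m+1).choose j) *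
      (((harmonic (m + 1) : ℚ) : ℂ) - ((harmonic j : ℚ) : ℂ)) =
      (∑ j ∈ Ico i (m+1), (-1:ℂ)^(j-i) * (j.choose i) * ((m+1).choose j) *
        (((harmonic (m + 1) : ℚ) : ℂ) - ((harmonic j : ℚ) : ℂ))) * (i:ℂ)^α := by
    rw [Finset.sum_mul]
    exact Finset.sum_congr rfl fun j _ => by ring
  rw [hsum]
  have hkc : ∑ j ∈ Ico i (m+1), (-1:ℂ)^(j-i) * (j.choose i) * ((m+1).choose j) *
      (((harmonic (m + 1) : ℚ) : ℂ) - ((harmonic j : ℚ) : ℂ)) =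
      (((m - i + 1 : ℕ) : ℂ))⁻¹ := by
    have h := key_s12 m i (by omega)
    calc ∑ j ∈ Ico i (m+1), (-1:ℂ)^(j-i) * (j.choose i) * ((m+1).choose j) *
        (((harmonic (m + 1) : ℚ) : ℂ) - ((harmonic j : ℚ) : ℂ))
        = ((∑ j ∈ Icc i m, (-1:ℚ)^(j-i) * (j.choose i) * ((m+1).choose j) *
            ((harmonic (m+1) : ℚ) - harmonic j) : ℚ) : ℂ) := by
          rw [show Icc i m = Ico i (m+1) from (Finset.Ico_add_one_right_eq_Icc i m).symm]
          push_cast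
          rfl
      _ = (((m - i + 1 : ℕ) : ℂ))⁻¹ := by rw [h]; push_cast; rfl
  rw [hkc, div_eq_mul_inv, mul_comm]
end

section
/- For all integers m ≥ j ≥ 0, ∑_{k=j}^m C(k, j) · H_k = C(m+1, j+1) · (H_{m+1} − 1/(j+1)), as an identity of rational numbers. -/
open Finset

theorem stmt13 (m j : ℕ) (h : j ≤ m) :
    ∑ k ∈ Icc j m, (Nat.choose k j : ℚ) * harmonic k =
      (Nat.choose (m + 1) (j + 1) : ℚ) * (harmonic (m + 1) - 1 / ((j : ℚ) + 1)) := by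
  induction m, h using Nat.le_induction with
  | base =>
    rw [Finset.Icc_self, Finset.sum_singleton, harmonic_succ, Nat.choose_self,
      Nat.choose_self]
    push_cast
    ring
  | succ m hm ih =>
    rw [Finset.sum_Icc_succ_top (by omega : j ≤ m + 1), ih]
    have key : ((m : ℚ) + 2) * (Nat.choose (m+1) j : ℚ)
        = (Nat.choose (m+2) (j+1) : ℚ) * ((j : ℚ) + 1) := by
      have h2 := Nat.add_one_mul_choose_eq (m+1) j
      have : ((m+2) * (m+1).choose j : ℕ) = ((m+2).choose (j+1) * (j+1) : ℕ) := h2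
      exact_mod_cast congrArg (fun n : ℕ => (n : ℚ)) this
    have pascal : (Nat.choose (m+2) (j+1) : ℚ)
        = (Nat.choose (m+1) j : ℚ) + (Nat.choose (m+1) (j+1) : ℚ) := by
      exact_mod_cast congrArg (fun n : ℕ => (n : ℚ)) (Nat.choose_succ_succ (m+1) j)
    rw [show m + 1 + 1 = m + 2 from rfl, harmonic_succ (m+1)]
    generalize (harmonic (m+1) : ℚ) = H at *
    rw [pascal] at key ⊢
    have hj : ((j : ℚ) + 1) ≠ 0 := by positivity
    have hm2 : ((m : ℚ) + 2) ≠ 0 := by positivity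
    push_cast at *
    field_simp
    linear_combination key
end

section
/- For all integers m ≥ j ≥ 0, ∑_{k=j}^m C(k, j) / (m − k + 1) = C(m+1, j) · (H_{m+1} − H_j), as an identity of rational numbers. -/
open Finset

private lemma icc_zero (n : ℕ) : Finset.Icc 0 n = Finset.range (n+1) := by
  ext x; simp [Nat.lt_succ_iff]

private lemma lemA (m : ℕ) :
    ∑ k ∈ Icc 0 m, (Nat.choose k 0 : ℚ) / ((m - k + 1 : ℕ) : ℚ) = harmonic (m + 1) := by
  rw [icc_zero]
  have := Finset.sum_range_reflect (fun i => ((i : ℚ) + 1)⁻¹) (m + 1)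
  have hh : harmonic (m+1) = ∑ i ∈ Finset.range (m+1), ((i:ℚ)+1)⁻¹ := by
    unfold harmonic; norm_num
  rw [hh, ← this]
  apply Finset.sum_congr rfl
  intro k hk
  simp only [Finset.mem_range, Nat.lt_succ_iff] at hk
  have h3 : m + 1 - 1 - k = m - k := by omega
  rw [h3, Nat.choose_zero_right]
  push_cast
  rw [one_div]

private lemma lemB (m j : ℕ) :
    ∑ k ∈ Icc (j+1) (m+1), (Nat.choose k (j+1) : ℚ) / (((m+1) - k + 1 : ℕ) : ℚ)
      = (∑ k ∈ Icc j m, (Nat.choose k j : ℚ) / ((m - k + 1 : ℕ) : ℚ))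
        + ∑ k ∈ Icc (j+1) m, (Nat.choose k (j+1) : ℚ) / ((m - k + 1 : ℕ) : ℚ) := by
  have hdrop : ∑ k ∈ Icc (j+1) m, (Nat.choose k (j+1) : ℚ) / ((m - k + 1 : ℕ) : ℚ)
      = ∑ k ∈ Icc j m, (Nat.choose k (j+1) : ℚ) / ((m - k + 1 : ℕ) : ℚ) := by
    rcases le_or_gt j m with hle | hlt
    · rw [Finset.Icc_eq_cons_Ioc hle, Finset.sum_cons, ← Finset.Icc_add_one_left_eq_Ioc]
      simp [Nat.choose_succ_self]
    · rw [Finset.Icc_eq_empty (by omega), Finset.Icc_eq_empty (by omega)]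
  rw [hdrop]
  have hmap : Finset.Icc (j+1) (m+1) = Finset.map (addRightEmbedding 1) (Finset.Icc j m) := by
    rw [Finset.map_add_right_Icc]
  rw [hmap, Finset.sum_map, ← Finset.sum_add_distrib]
  apply Finset.sum_congr rfl
  intro k hk
  simp only [addRightEmbedding_apply]
  have h1 : (m + 1) - (k + 1) + 1 = m - k + 1 := by omega
  rw [h1, Nat.choose_succ_succ, Nat.cast_add, add_div]

private lemma lemC (n j : ℕ) :
    (Nat.choose (n+1) j : ℚ) * (harmonic (n+1) - harmonic j)
      + (Nat.choose (n+1) (j+1) : ℚ) * (harmonic (n+1) - harmonic (j+1))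
      = (Nat.choose (n+2) (j+1) : ℚ) * (harmonic (n+2) - harmonic (j+1)) := by
  have hp : (Nat.choose (n+2) (j+1) : ℚ) = Nat.choose (n+1) j + Nat.choose (n+1) (j+1) := by
    rw [Nat.choose_succ_succ (n+1) j]; push_cast; ring
  have hm : ((n:ℚ)+2) * (Nat.choose (n+1) j : ℚ) = (Nat.choose (n+2) (j+1) : ℚ) * ((j:ℚ)+1) := by
    have := congrArg (Nat.cast : ℕ → ℚ) (Nat.add_one_mul_choose_eq (n+1) j)
    push_cast at this
    linarith [this]
  have h1 : ((n:ℚ)+1+1) ≠ 0 := by positivity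
  have h2 : ((j:ℚ)+1) ≠ 0 := by positivity
  have hkey : (Nat.choose (n+2) (j+1) : ℚ) * (((n:ℚ)+1+1))⁻¹
      = (Nat.choose (n+1) j : ℚ) * (((j:ℚ)+1))⁻¹ := by
    field_simp
    linarith [hm]
  rw [show n+2 = (n+1)+1 from rfl, harmonic_succ (n+1), harmonic_succ j]
  push_cast
  linear_combination (-(harmonic (n+1) - harmonic j - (((j:ℚ)+1))⁻¹)) * hp - hkey

private lemma mainlem (m : ℕ) : ∀ j, j ≤ m + 1 →
    ∑ k ∈ Icc j m, (Nat.choose k j : ℚ) / ((m - k + 1 : ℕ) : ℚ) =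
      (Nat.choose (m + 1) j : ℚ) * (harmonic (m + 1) - harmonic j) := by
  induction m with
  | zero =>
    intro j hj
    interval_cases j
    · simp [harmonic_succ]
    · simp
  | succ n ih =>
    intro j hj
    rcases j with _ | j'
    · rw [lemA]
      simp
    · rcases Nat.lt_or_ge j' (n+1) with hlt | hge
      · have h1 := ih j' (by omega)
        have h2' : ∑ k ∈ Icc (j'+1) n, (Nat.choose k (j'+1) : ℚ) / ((n - k + 1 : ℕ) : ℚ) =
            (Nat.choose (n + 1) (j'+1) : ℚ) * (harmonic (n + 1) - harmonic (j'+1)) := by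
          rcases Nat.lt_or_ge (j'+1) (n+1) with hlt2 | hge2
          · exact ih (j'+1) (by omega)
          · have hj2 : j' + 1 = n + 1 := by omega
            rw [hj2, Finset.Icc_eq_empty (by omega)]
            simp
        rw [lemB, h1, h2']
        exact lemC n j'
      · have hj2 : j' = n + 1 := by omega
        subst hj2
        rw [Finset.Icc_eq_empty (by omega)]
        simp

theorem stmt14 (m j : ℕ) (h : j ≤ m) :
    ∑ k ∈ Icc j m, (Nat.choose k j : ℚ) / ((m - k + 1 : ℕ) : ℚ) =
      (Nat.choose (m + 1) j : ℚ) * (harmonic (m + 1) - harmonic j) := by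
  exact mainlem m j (by omega)
end
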